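/- Under the Algorithm 1 setup with the F-local attack model, 𝓑 ≠ ∅, and G being ((d+1)F+1)-robust: for every p ∈ {1, …, d} and every k ≥ 0 with (k mod d) + 1 = p, Δ_p(k + d·|𝓑|) ≤ (1 − 1/(2·3^{d·|𝓑|})) · Δ_p(k). -/

import Mathlib

/-- `Psi x n` is the intersection, over all subsets `S` of the (finite) index set
with `|S| = m - n` (where `m` is the cardinality of the index set), of the convex
hull of the points indexed by `S`. -/
def Psi {d : ℕ} {ι : Type*} [Fintype ι] (x : ι → (Fin d → ℝ)) (n : ℕ) :
    Set (Fin d → ℝ) :=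
  ⋂ S ∈ {S : Finset ι | S.card = Fintype.card ι - n},
    convexHull ℝ (x '' (S : Set ι))

/-- The setup of Algorithm 1: `G` is the (undirected) communication graph on the
finite vertex set `V` in which every vertex has at least `(d+1)F + 1` neighbors,
`Fset` is the set of misbehaving agents, `x k i` is the state of agent `i` at time
`k`, and `msg k j i` is the value agent `j` sends to agent `i` at time `k` (equal
to `x k j` whenever `j` is benign).  Every benign agent `i` updates at time `k` by
sorting on coordinate `p = (k % d) + 1` (0-indexed: `k % d`): it chooses sets
`Y`, `Z` of `(d+1)F + 1` neighbors whose received values are smallest (resp.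
largest) in that coordinate, picks middle points `y ∈ Ψ(Y-values, F)` and
`z ∈ Ψ(Z-values, F)`, and sets `x (k+1) i = (x k i + y + z) / 3`. -/
structure Algo1 {V : Type*} [Fintype V] [DecidableEq V]
    (d F : ℕ) (hd : 0 < d) (G : SimpleGraph V) [DecidableRel G.Adj]
    (Fset : Finset V) (x : ℕ → V → (Fin d → ℝ))
    (msg : ℕ → V → V → (Fin d → ℝ)) : Prop where
  degree : ∀ i : V, (d + 1) * F + 1 ≤ (G.neighborFinset i).card
  benign_msg : ∀ (k : ℕ) (j i : V), j ∉ Fset → msg k j i = x k j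
  update : ∀ (k : ℕ) (i : V), i ∉ Fset →
    ∃ (Y Z : Finset V) (yv zv : Fin d → ℝ),
      Y ⊆ G.neighborFinset i ∧ Z ⊆ G.neighborFinset i ∧
      Y.card = (d + 1) * F + 1 ∧ Z.card = (d + 1) * F + 1 ∧
      (∀ a ∈ Y, ∀ b ∈ G.neighborFinset i, b ∉ Y →
        msg k a i ⟨k % d, Nat.mod_lt k hd⟩ ≤ msg k b i ⟨k % d, Nat.mod_lt k hd⟩) ∧
      (∀ a ∈ Z, ∀ b ∈ G.neighborFinset i, b ∉ Z →
        msg k b i ⟨k % d, Nat.mod_lt k hd⟩ ≤ msg k a i ⟨k % d, Nat.mod_lt k hd⟩) ∧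
      yv ∈ Psi (fun j : Y => msg k j i) F ∧
      zv ∈ Psi (fun j : Z => msg k j i) F ∧
      x (k + 1) i = ((1 : ℝ) / 3) • (x k i + yv + zv)

/-- A graph is `r`-robust if for every pair of disjoint nonempty proper subsets
`V₁, V₂` of the vertex set, some agent in `V₁` has at least `r` neighbors outside
`V₁`, or some agent in `V₂` has at least `r` neighbors outside `V₂`. -/
def RRobust {V : Type*} [Fintype V] [DecidableEq V]
    (G : SimpleGraph V) [DecidableRel G.Adj] (r : ℕ) : Prop :=
  ∀ V₁ V₂ : Finset V, V₁.Nonempty → V₂.Nonempty → Disjoint V₁ V₂ →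
    V₁ ≠ Finset.univ → V₂ ≠ Finset.univ →
    (∃ i ∈ V₁, r ≤ (G.neighborFinset i \ V₁).card) ∨
    (∃ i ∈ V₂, r ≤ (G.neighborFinset i \ V₂).card)

/-- A graph is `(r, s)`-robust if for every pair of disjoint nonempty proper
subsets `V₁, V₂` of the vertex set, either every agent in `V₁` has at least `r`
neighbors outside `V₁`, or every agent in `V₂` has at least `r` neighbors outside
`V₂`, or at least `s` agents in `V₁ ∪ V₂` have at least `r` neighbors outside the
set among `V₁`, `V₂` containing them. -/
def RSRobust {V : Type*} [Fintype V] [DecidableEq V]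
    (G : SimpleGraph V) [DecidableRel G.Adj] (r s : ℕ) : Prop :=
  ∀ V₁ V₂ : Finset V, V₁.Nonempty → V₂.Nonempty → Disjoint V₁ V₂ →
    V₁ ≠ Finset.univ → V₂ ≠ Finset.univ →
    (∀ i ∈ V₁, r ≤ (G.neighborFinset i \ V₁).card) ∨
    (∀ i ∈ V₂, r ≤ (G.neighborFinset i \ V₂).card) ∨
    s ≤ ((V₁.filter (fun i => r ≤ (G.neighborFinset i \ V₁).card)) ∪
         (V₂.filter (fun i => r ≤ (G.neighborFinset i \ V₂).card))).card


lemma conv_coord_le {d : ℕ} {s : Set (Fin d → ℝ)} {u : Fin d → ℝ}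
    (h : u ∈ convexHull ℝ s) (p : Fin d) (c : ℝ) (hs : ∀ v ∈ s, v p ≤ c) : u p ≤ c :=
  convexHull_min hs (convex_halfSpace_le
    (⟨fun _ _ => rfl, fun _ _ => rfl⟩ : IsLinearMap ℝ fun v : Fin d → ℝ => v p) c) h

lemma conv_coord_ge {d : ℕ} {s : Set (Fin d → ℝ)} {u : Fin d → ℝ}
    (h : u ∈ convexHull ℝ s) (p : Fin d) (c : ℝ) (hs : ∀ v ∈ s, c ≤ v p) : c ≤ u p :=
  convexHull_min hs (convex_halfSpace_ge
    (⟨fun _ _ => rfl, fun _ _ => rfl⟩ : IsLinearMap ℝ fun v : Fin d → ℝ => v p) c) h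

lemma psi_sub {V : Type*} [DecidableEq V] {d F : ℕ} (Y : Finset V) (g : V → Fin d → ℝ)
    {yv : Fin d → ℝ} (hyv : yv ∈ Psi (fun j : Y => g j) F)
    (E : Finset V) (hE : E ⊆ Y) (hEcard : E.card ≤ F) (hYF : F ≤ Y.card) :
    ∃ D : Finset V, E ⊆ D ∧ D ⊆ Y ∧
      yv ∈ convexHull ℝ (g '' ((Y \ D : Finset V) : Set V)) := by
  obtain ⟨D, hED, hDY, hDcard⟩ := Finset.exists_subsuperset_card_eq hE hEcard hYF
  refine ⟨D, hED, hDY, ?_⟩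
  classical
  set S : Finset Y := Finset.subtype (· ∈ Y) (Y \ D) with hSdef
  have hScard : S.card = Fintype.card Y - F := by
    rw [Fintype.card_coe, hSdef, Finset.card_subtype,
      Finset.filter_true_of_mem (fun a ha => (Finset.mem_sdiff.1 ha).1),
      Finset.card_sdiff_of_subset hDY, hDcard]
  have hmem : yv ∈ convexHull ℝ ((fun j : Y => g j) '' (S : Set Y)) := by
    simp only [Psi, Set.mem_iInter, Set.mem_setOf_eq] at hyv
    exact hyv S hScard
  have himg : (fun j : Y => g j) '' (S : Set Y) = g '' ((Y \ D : Finset V) : Set V) := by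
    ext v
    constructor
    · rintro ⟨j, hj, rfl⟩
      exact ⟨j, by simpa [hSdef, Finset.mem_subtype] using hj, rfl⟩
    · rintro ⟨a, ha, rfl⟩
      have haY : a ∈ Y := Finset.sdiff_subset (Finset.mem_coe.1 ha)
      exact ⟨⟨a, haY⟩, by simpa [hSdef, Finset.mem_subtype] using ha, rfl⟩
  rwa [himg] at hmem

lemma psi_coord_le {V : Type*} [DecidableEq V] {d F : ℕ} (Y : Finset V)
    (g : V → Fin d → ℝ) {yv : Fin d → ℝ} (hyv : yv ∈ Psi (fun j : Y => g j) F)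
    (hYF : F ≤ Y.card) (p : Fin d) (c : ℝ)
    (hsmall : (Y.filter (fun j => ¬ g j p ≤ c)).card ≤ F) : yv p ≤ c := by
  classical
  obtain ⟨D, hED, _, hmem⟩ := psi_sub Y g hyv _ (Finset.filter_subset _ _) hsmall hYF
  refine conv_coord_le hmem p c ?_
  rintro v ⟨j, hj, rfl⟩
  have hj' := Finset.mem_sdiff.1 (Finset.mem_coe.1 hj)
  by_contra hgt
  exact hj'.2 (hED (Finset.mem_filter.2 ⟨hj'.1, hgt⟩))

lemma psi_coord_ge {V : Type*} [DecidableEq V] {d F : ℕ} (Y : Finset V)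
    (g : V → Fin d → ℝ) {yv : Fin d → ℝ} (hyv : yv ∈ Psi (fun j : Y => g j) F)
    (hYF : F ≤ Y.card) (p : Fin d) (c : ℝ)
    (hsmall : (Y.filter (fun j => ¬ c ≤ g j p)).card ≤ F) : c ≤ yv p := by
  classical
  obtain ⟨D, hED, _, hmem⟩ := psi_sub Y g hyv _ (Finset.filter_subset _ _) hsmall hYF
  refine conv_coord_ge hmem p c ?_
  rintro v ⟨j, hj, rfl⟩
  have hj' := Finset.mem_sdiff.1 (Finset.mem_coe.1 hj)
  by_contra hgt
  exact hj'.2 (hED (Finset.mem_filter.2 ⟨hj'.1, hgt⟩))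

lemma F_le_card {d F n : ℕ} (h : n = (d + 1) * F + 1) : F ≤ n := by
  subst h; rw [add_mul, one_mul]
  exact Nat.le_succ_of_le (Nat.le_add_left F (d * F))

section Steps

set_option linter.unusedSectionVars false

variable {V : Type*} [Fintype V] [DecidableEq V]
    {d F : ℕ} {hd : 0 < d} {G : SimpleGraph V} [DecidableRel G.Adj]
    {Fset : Finset V} {x : ℕ → V → (Fin d → ℝ)}
    {msg : ℕ → V → V → (Fin d → ℝ)}
    (halg : Algo1 d F hd G Fset x msg)
    (hB : (Fsetᶜ : Finset V).Nonempty)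
    (hlocal : ∀ i : V, (Fset ∩ G.neighborFinset i).card ≤ F)

lemma coord_update {t : ℕ} {i : V} {yv zv : Fin d → ℝ} (p : Fin d)
    (h : x (t + 1) i = ((1 : ℝ) / 3) • (x t i + yv + zv)) :
    x (t + 1) i p = (x t i p + yv p + zv p) / 3 := by
  rw [h]; simp [Pi.smul_apply, Pi.add_apply]; ring

include halg hB hlocal in
lemma step_basic (t : ℕ) (p : Fin d) {i : V} (hi : i ∉ Fset) :
    x (t + 1) i p ≤ (x t i p + 2 * (Fsetᶜ : Finset V).sup' hB (fun j => x t j p)) / 3 ∧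
    ((x t i p + 2 * (Fsetᶜ : Finset V).inf' hB (fun j => x t j p)) / 3) ≤ x (t + 1) i p := by
  classical
  obtain ⟨Y, Z, yv, zv, hYN, hZN, hYc, hZc, _, _, hyv, hzv, hupd⟩ := halg.update t i hi
  have hEgen : ∀ (W : Finset V), W ⊆ G.neighborFinset i → ∀ (Pr : V → Prop) [DecidablePred Pr],
      (∀ j, j ∉ Fset → Pr j → False) → (W.filter Pr).card ≤ F := by
    intro W hWN Pr _ hPr
    refine le_trans (Finset.card_le_card ?_) (hlocal i)
    intro j hj
    rw [Finset.mem_filter] at hj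
    rw [Finset.mem_inter]
    refine ⟨?_, hWN hj.1⟩
    by_contra hjF
    exact hPr j hjF hj.2
  have hbound : ∀ j, j ∉ Fset →
      (Fsetᶜ : Finset V).inf' hB (fun j => x t j p) ≤ msg t j i p ∧
      msg t j i p ≤ (Fsetᶜ : Finset V).sup' hB (fun j => x t j p) := by
    intro j hj
    rw [halg.benign_msg t j i hj]
    have hjB : j ∈ (Fsetᶜ : Finset V) := Finset.mem_compl.2 hj
    exact ⟨Finset.inf'_le (fun j => x t j p) hjB, Finset.le_sup' (fun j => x t j p) hjB⟩
  have hy1 := psi_coord_le Y (fun j => msg t j i) hyv (F_le_card hYc) p _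
    (hEgen Y hYN _ (fun j hj hne => hne (hbound j hj).2))
  have hy2 := psi_coord_ge Y (fun j => msg t j i) hyv (F_le_card hYc) p _
    (hEgen Y hYN _ (fun j hj hne => hne (hbound j hj).1))
  have hz1 := psi_coord_le Z (fun j => msg t j i) hzv (F_le_card hZc) p _
    (hEgen Z hZN _ (fun j hj hne => hne (hbound j hj).2))
  have hz2 := psi_coord_ge Z (fun j => msg t j i) hzv (F_le_card hZc) p _
    (hEgen Z hZN _ (fun j hj hne => hne (hbound j hj).1))
  have heq := coord_update (x := x) p hupd
  constructor <;> linarith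

include halg hB hlocal in
lemma step_sorted_up (t : ℕ) (p : Fin d) (hp : (p : ℕ) = t % d) {i : V} (hi : i ∉ Fset)
    (c : ℝ) (T : Finset V) (hTN : T ⊆ G.neighborFinset i) (hTF : Disjoint T Fset)
    (hTc : d * F + 1 ≤ T.card) (hTval : ∀ j ∈ T, x t j p ≤ c) :
    x (t + 1) i p ≤ (2 * (Fsetᶜ : Finset V).sup' hB (fun j => x t j p) + c) / 3 := by
  classical
  obtain ⟨Y, Z, yv, zv, hYN, hZN, hYc, hZc, hYs, _, hyv, hzv, hupd⟩ := halg.update t i hi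
  have hfin : (⟨t % d, Nat.mod_lt t hd⟩ : Fin d) = p := by
    apply Fin.ext; simp [hp]
  rw [hfin] at hYs
  have hTmsg : ∀ j ∈ T, msg t j i p ≤ c := by
    intro j hj
    rw [halg.benign_msg t j i (Finset.disjoint_left.1 hTF hj)]
    exact hTval j hj
  have hy : yv p ≤ c := by
    refine psi_coord_le Y (fun j => msg t j i) hyv (F_le_card hYc) p c ?_
    show (Y.filter (fun j => ¬ msg t j i p ≤ c)).card ≤ F
    by_cases hTY : T ⊆ Y
    · have hEsub : Y.filter (fun j => ¬ msg t j i p ≤ c) ⊆ Y \ T := by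
        intro j hj
        rw [Finset.mem_filter] at hj
        rw [Finset.mem_sdiff]
        exact ⟨hj.1, fun hjT => hj.2 (hTmsg j hjT)⟩
      have h1 := Finset.card_le_card hEsub
      have h2 : (Y \ T).card = Y.card - T.card := Finset.card_sdiff_of_subset hTY
      have h3 : T.card ≤ Y.card := Finset.card_le_card hTY
      obtain ⟨q, hq⟩ : ∃ q, d * F = q := ⟨_, rfl⟩
      have hYc2 : Y.card = q + F + 1 := by rw [hYc, add_mul, one_mul, hq]
      rw [hq] at hTc
      omega
    · obtain ⟨t₀, ht₀T, ht₀Y⟩ := Finset.not_subset.1 hTY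
      have hall : ∀ j ∈ Y, msg t j i p ≤ c := fun j hj =>
        le_trans (hYs j hj t₀ (hTN ht₀T) ht₀Y) (hTmsg t₀ ht₀T)
      have hemp : Y.filter (fun j => ¬ msg t j i p ≤ c) = ∅ := by
        apply Finset.filter_eq_empty_iff.2
        intro j hj
        simp [hall j hj]
      rw [hemp]
      simp
  have hbound : ∀ j, j ∉ Fset → msg t j i p ≤ (Fsetᶜ : Finset V).sup' hB (fun j => x t j p) := by
    intro j hj
    rw [halg.benign_msg t j i hj]
    exact Finset.le_sup' (fun j => x t j p) (Finset.mem_compl.2 hj)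
  have hz : zv p ≤ (Fsetᶜ : Finset V).sup' hB (fun j => x t j p) := by
    refine psi_coord_le Z (fun j => msg t j i) hzv (F_le_card hZc) p _ ?_
    refine le_trans (Finset.card_le_card ?_) (hlocal i)
    intro j hj
    rw [Finset.mem_filter] at hj
    rw [Finset.mem_inter]
    refine ⟨?_, hZN hj.1⟩
    by_contra hjF
    exact hj.2 (hbound j hjF)
  have hown : x t i p ≤ (Fsetᶜ : Finset V).sup' hB (fun j => x t j p) :=
    Finset.le_sup' (fun j => x t j p) (Finset.mem_compl.2 hi)
  have heq := coord_update (x := x) p hupd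
  linarith

include halg hB hlocal in
lemma step_sorted_down (t : ℕ) (p : Fin d) (hp : (p : ℕ) = t % d) {i : V} (hi : i ∉ Fset)
    (c : ℝ) (T : Finset V) (hTN : T ⊆ G.neighborFinset i) (hTF : Disjoint T Fset)
    (hTc : d * F + 1 ≤ T.card) (hTval : ∀ j ∈ T, c ≤ x t j p) :
    (2 * (Fsetᶜ : Finset V).inf' hB (fun j => x t j p) + c) / 3 ≤ x (t + 1) i p := by
  classical
  obtain ⟨Y, Z, yv, zv, hYN, hZN, hYc, hZc, _, hZs, hyv, hzv, hupd⟩ := halg.update t i hi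
  have hfin : (⟨t % d, Nat.mod_lt t hd⟩ : Fin d) = p := by
    apply Fin.ext; simp [hp]
  rw [hfin] at hZs
  have hTmsg : ∀ j ∈ T, c ≤ msg t j i p := by
    intro j hj
    rw [halg.benign_msg t j i (Finset.disjoint_left.1 hTF hj)]
    exact hTval j hj
  have hz : c ≤ zv p := by
    refine psi_coord_ge Z (fun j => msg t j i) hzv (F_le_card hZc) p c ?_
    show (Z.filter (fun j => ¬ c ≤ msg t j i p)).card ≤ F
    by_cases hTZ : T ⊆ Z
    · have hEsub : Z.filter (fun j => ¬ c ≤ msg t j i p) ⊆ Z \ T := by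
        intro j hj
        rw [Finset.mem_filter] at hj
        rw [Finset.mem_sdiff]
        exact ⟨hj.1, fun hjT => hj.2 (hTmsg j hjT)⟩
      have h1 := Finset.card_le_card hEsub
      have h2 : (Z \ T).card = Z.card - T.card := Finset.card_sdiff_of_subset hTZ
      have h3 : T.card ≤ Z.card := Finset.card_le_card hTZ
      obtain ⟨q, hq⟩ : ∃ q, d * F = q := ⟨_, rfl⟩
      have hZc2 : Z.card = q + F + 1 := by rw [hZc, add_mul, one_mul, hq]
      rw [hq] at hTc
      omega
    · obtain ⟨t₀, ht₀T, ht₀Z⟩ := Finset.not_subset.1 hTZ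
      have hall : ∀ j ∈ Z, c ≤ msg t j i p := fun j hj =>
        le_trans (hTmsg t₀ ht₀T) (hZs j hj t₀ (hTN ht₀T) ht₀Z)
      have hemp : Z.filter (fun j => ¬ c ≤ msg t j i p) = ∅ := by
        apply Finset.filter_eq_empty_iff.2
        intro j hj
        simp [hall j hj]
      rw [hemp]
      simp
  have hbound : ∀ j, j ∉ Fset → (Fsetᶜ : Finset V).inf' hB (fun j => x t j p) ≤ msg t j i p := by
    intro j hj
    rw [halg.benign_msg t j i hj]
    exact Finset.inf'_le (fun j => x t j p) (Finset.mem_compl.2 hj)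
  have hy : (Fsetᶜ : Finset V).inf' hB (fun j => x t j p) ≤ yv p := by
    refine psi_coord_ge Y (fun j => msg t j i) hyv (F_le_card hYc) p _ ?_
    refine le_trans (Finset.card_le_card ?_) (hlocal i)
    intro j hj
    rw [Finset.mem_filter] at hj
    rw [Finset.mem_inter]
    refine ⟨?_, hYN hj.1⟩
    by_contra hjF
    exact hj.2 (hbound j hjF)
  have hown : (Fsetᶜ : Finset V).inf' hB (fun j => x t j p) ≤ x t i p :=
    Finset.inf'_le (fun j => x t j p) (Finset.mem_compl.2 hi)
  have heq := coord_update (x := x) p hupd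
  linarith

end Steps

theorem stmt11 {V : Type*} [Fintype V] [DecidableEq V]
    (d F : ℕ) (hd : 0 < d) (G : SimpleGraph V) [DecidableRel G.Adj]
    (Fset : Finset V) (x : ℕ → V → (Fin d → ℝ))
    (msg : ℕ → V → V → (Fin d → ℝ))
    (halg : Algo1 d F hd G Fset x msg)
    (hB : (Fsetᶜ : Finset V).Nonempty)
    (hlocal : ∀ i : V, (Fset ∩ G.neighborFinset i).card ≤ F)
    (hrobust : RRobust G ((d + 1) * F + 1)) :
    ∀ (p : Fin d) (k : ℕ), (p : ℕ) = k % d →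
      (Fsetᶜ : Finset V).sup' hB (fun i => x (k + d * (Fsetᶜ : Finset V).card) i p) -
          (Fsetᶜ : Finset V).inf' hB (fun i => x (k + d * (Fsetᶜ : Finset V).card) i p) ≤
        (1 - 1 / (2 * (3 : ℝ) ^ (d * (Fsetᶜ : Finset V).card))) *
          ((Fsetᶜ : Finset V).sup' hB (fun i => x k i p) -
            (Fsetᶜ : Finset V).inf' hB (fun i => x k i p)) := by
  classical
  intro p k hp
  obtain ⟨q0, hq0⟩ := id hB
  set m := (Fsetᶜ : Finset V).card with hm
  set M := (Fsetᶜ : Finset V).sup' hB (fun i => x k i p) with hM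
  set m0 := (Fsetᶜ : Finset V).inf' hB (fun i => x k i p) with hm0
  have h30 : ∀ t : ℕ, (0:ℝ) < 3 ^ t := fun t => pow_pos (by norm_num) t
  set ε : ℕ → ℝ := fun t => (M - m0) / (2 * 3 ^ t) with hε
  set A : ℕ → Finset V := fun t =>
    (Fsetᶜ : Finset V).filter (fun i => M - ε t < x (k + t) i p) with hA
  set Bb : ℕ → Finset V := fun t =>
    (Fsetᶜ : Finset V).filter (fun i => x (k + t) i p < m0 + ε t) with hBb
  have hΔ0 : 0 ≤ M - m0 := by
    have h1 := Finset.inf'_le (fun i => x k i p) hq0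
    have h2 := Finset.le_sup' (fun i => x k i p) hq0
    rw [← hM] at h2; rw [← hm0] at h1; linarith
  have hε0 : ∀ t, 0 ≤ ε t := fun t => div_nonneg hΔ0 (by positivity)
  have hε_succ : ∀ t, ε (t + 1) = ε t / 3 := by
    intro t
    simp only [hε, pow_succ]
    ring
  have hε_le : ∀ t, 2 * ε t ≤ M - m0 := by
    intro t
    have h1 : (1:ℝ) ≤ 3 ^ t := one_le_pow₀ (by norm_num)
    have h2 : ε t = (M - m0) / 3 ^ t / 2 := by simp only [hε]; ring
    have h3 : (M - m0) / 3 ^ t ≤ M - m0 := div_le_self hΔ0 h1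
    rw [h2]; linarith
  have hmemA : ∀ t i, i ∈ A t ↔ (i ∈ (Fsetᶜ : Finset V) ∧ M - ε t < x (k + t) i p) := by
    intro t i; simp [hA, Finset.mem_filter]
  have hmemB : ∀ t i, i ∈ Bb t ↔ (i ∈ (Fsetᶜ : Finset V) ∧ x (k + t) i p < m0 + ε t) := by
    intro t i; simp [hBb, Finset.mem_filter]
  -- monotone sup/inf
  have Smono : ∀ t : ℕ,
      (Fsetᶜ : Finset V).sup' hB (fun i => x (t + 1) i p) ≤
      (Fsetᶜ : Finset V).sup' hB (fun i => x t i p) := by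
    intro t
    apply Finset.sup'_le
    intro i hiB
    have h := (step_basic halg hB hlocal t p (Finset.mem_compl.1 hiB)).1
    have h2 := Finset.le_sup' (fun j => x t j p) hiB
    linarith
  have Imono : ∀ t : ℕ,
      (Fsetᶜ : Finset V).inf' hB (fun i => x t i p) ≤
      (Fsetᶜ : Finset V).inf' hB (fun i => x (t + 1) i p) := by
    intro t
    apply Finset.le_inf'
    intro i hiB
    have h := (step_basic halg hB hlocal t p (Finset.mem_compl.1 hiB)).2
    have h2 := Finset.inf'_le (fun j => x t j p) hiB
    linarith
  have SleM : ∀ t : ℕ, (Fsetᶜ : Finset V).sup' hB (fun i => x (k + t) i p) ≤ M := by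
    intro t
    induction t with
    | zero => rw [hM]; simp
    | succ t ih => exact le_trans (Smono (k + t)) ih
  have Igem : ∀ t : ℕ, m0 ≤ (Fsetᶜ : Finset V).inf' hB (fun i => x (k + t) i p) := by
    intro t
    induction t with
    | zero => rw [hm0]; simp
    | succ t ih => exact le_trans ih (Imono (k + t))
  -- shrinking of extreme sets
  have hAsub : ∀ t, A (t + 1) ⊆ A t := by
    intro t i hi
    rw [hmemA] at hi ⊢
    refine ⟨hi.1, ?_⟩
    by_contra hle
    push_neg at hle
    have h := (step_basic halg hB hlocal (k + t) p (Finset.mem_compl.1 hi.1)).1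
    have hsup := SleM t
    have h2 := hi.2
    have hidx : k + (t + 1) = (k + t) + 1 := rfl
    rw [hidx] at h2
    have he := hε_succ t
    linarith
  have hBsub : ∀ t, Bb (t + 1) ⊆ Bb t := by
    intro t i hi
    rw [hmemB] at hi ⊢
    refine ⟨hi.1, ?_⟩
    by_contra hle
    push_neg at hle
    have h := (step_basic halg hB hlocal (k + t) p (Finset.mem_compl.1 hi.1)).2
    have hinf := Igem t
    have h2 := hi.2
    have hidx : k + (t + 1) = (k + t) + 1 := rfl
    rw [hidx] at h2
    have he := hε_succ t
    linarith
  have hAchain : ∀ a b : ℕ, a ≤ b → A b ⊆ A a := by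
    intro a b hab
    obtain ⟨c, rfl⟩ := Nat.exists_eq_add_of_le hab
    induction c with
    | zero => exact Finset.Subset.refl _
    | succ c ih =>
        exact Finset.Subset.trans (hAsub (a + c)) (ih (Nat.le_add_right a c))
  have hBchain : ∀ a b : ℕ, a ≤ b → Bb b ⊆ Bb a := by
    intro a b hab
    obtain ⟨c, rfl⟩ := Nat.exists_eq_add_of_le hab
    induction c with
    | zero => exact Finset.Subset.refl _
    | succ c ih =>
        exact Finset.Subset.trans (hBsub (a + c)) (ih (Nat.le_add_right a c))
  have hdisj : ∀ t, Disjoint (A t) (Bb t) := by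
    intro t
    rw [Finset.disjoint_left]
    intro i hiA hiB
    rw [hmemA] at hiA
    rw [hmemB] at hiB
    have := hε_le t
    have h1 := hiA.2
    have h2 := hiB.2
    linarith
  -- sorted-time strict decrease
  have hdrop : ∀ t, (A t).Nonempty → (Bb t).Nonempty → (k + t) % d = k % d →
      (A (t + 1)).card + (Bb (t + 1)).card + 1 ≤ (A t).card + (Bb t).card := by
    intro t hAne hBne hmod
    have hp' : (p : ℕ) = (k + t) % d := by rw [hmod]; exact hp
    have hAuniv : A t ≠ Finset.univ := by
      obtain ⟨b, hb⟩ := hBne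
      intro hEq
      exact (Finset.disjoint_left.1 (hdisj t)) (hEq ▸ Finset.mem_univ b) hb
    have hBuniv : Bb t ≠ Finset.univ := by
      obtain ⟨a, ha⟩ := hAne
      intro hEq
      exact (Finset.disjoint_left.1 (hdisj t)) ha (hEq ▸ Finset.mem_univ a)
    have hTcard : ∀ i : V, (d + 1) * F + 1 ≤ (G.neighborFinset i \ A t).card →
        d * F + 1 ≤ ((G.neighborFinset i \ A t) \ Fset).card := by
      intro i hcard
      have hsub : (G.neighborFinset i \ A t) ∩ Fset ⊆ Fset ∩ G.neighborFinset i := by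
        intro a ha
        rw [Finset.mem_inter] at ha ⊢
        exact ⟨ha.2, (Finset.mem_sdiff.1 ha.1).1⟩
      have h1 : ((G.neighborFinset i \ A t) \ Fset).card =
          (G.neighborFinset i \ A t).card - ((G.neighborFinset i \ A t) ∩ Fset).card := by
        rw [← Finset.sdiff_inter_self_left]
        exact Finset.card_sdiff_of_subset Finset.inter_subset_left
      have h2 := le_trans (Finset.card_le_card hsub) (hlocal i)
      obtain ⟨q, hq⟩ : ∃ q, d * F = q := ⟨_, rfl⟩
      have h3 : (d + 1) * F + 1 = q + F + 1 := by rw [← hq]; ring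
      rw [h3] at hcard
      rw [hq]
      omega
    have hTcardB : ∀ i : V, (d + 1) * F + 1 ≤ (G.neighborFinset i \ Bb t).card →
        d * F + 1 ≤ ((G.neighborFinset i \ Bb t) \ Fset).card := by
      intro i hcard
      have hsub : (G.neighborFinset i \ Bb t) ∩ Fset ⊆ Fset ∩ G.neighborFinset i := by
        intro a ha
        rw [Finset.mem_inter] at ha ⊢
        exact ⟨ha.2, (Finset.mem_sdiff.1 ha.1).1⟩
      have h1 : ((G.neighborFinset i \ Bb t) \ Fset).card =
          (G.neighborFinset i \ Bb t).card - ((G.neighborFinset i \ Bb t) ∩ Fset).card := by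
        rw [← Finset.sdiff_inter_self_left]
        exact Finset.card_sdiff_of_subset Finset.inter_subset_left
      have h2 := le_trans (Finset.card_le_card hsub) (hlocal i)
      obtain ⟨q, hq⟩ : ∃ q, d * F = q := ⟨_, rfl⟩
      have h3 : (d + 1) * F + 1 = q + F + 1 := by rw [← hq]; ring
      rw [h3] at hcard
      rw [hq]
      omega
    rcases hrobust (A t) (Bb t) hAne hBne (hdisj t) hAuniv hBuniv with
      ⟨i, hiA, hcard⟩ | ⟨i, hiB, hcard⟩
    · -- agent in A pulled down
      have hiB' : i ∈ (Fsetᶜ : Finset V) := ((hmemA t i).1 hiA).1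
      have hiF : i ∉ Fset := Finset.mem_compl.1 hiB'
      have hTN : (G.neighborFinset i \ A t) \ Fset ⊆ G.neighborFinset i :=
        Finset.Subset.trans Finset.sdiff_subset Finset.sdiff_subset
      have hTF : Disjoint ((G.neighborFinset i \ A t) \ Fset) Fset := Finset.sdiff_disjoint
      have hTval : ∀ j ∈ (G.neighborFinset i \ A t) \ Fset, x (k + t) j p ≤ M - ε t := by
        intro j hj
        rw [Finset.mem_sdiff, Finset.mem_sdiff] at hj
        have hjB : j ∈ (Fsetᶜ : Finset V) := Finset.mem_compl.2 hj.2
        by_contra hgt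
        push_neg at hgt
        exact hj.1.2 ((hmemA t j).2 ⟨hjB, hgt⟩)
      have hup := step_sorted_up halg hB hlocal (k + t) p hp' hiF (M - ε t) _
        hTN hTF (hTcard i hcard) hTval
      have hsup := SleM t
      have hnotA : i ∉ A (t + 1) := by
        rw [hmemA]
        push_neg
        intro _
        have hidx : k + (t + 1) = (k + t) + 1 := rfl
        rw [hidx]
        have he := hε_succ t
        linarith
      have hlt := Finset.card_lt_card
        ((Finset.ssubset_iff_of_subset (hAsub t)).2 ⟨i, hiA, hnotA⟩)
      have hble := Finset.card_le_card (hBsub t)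
      omega
    · -- agent in Bb pulled up
      have hiB' : i ∈ (Fsetᶜ : Finset V) := ((hmemB t i).1 hiB).1
      have hiF : i ∉ Fset := Finset.mem_compl.1 hiB'
      have hTN : (G.neighborFinset i \ Bb t) \ Fset ⊆ G.neighborFinset i :=
        Finset.Subset.trans Finset.sdiff_subset Finset.sdiff_subset
      have hTF : Disjoint ((G.neighborFinset i \ Bb t) \ Fset) Fset := Finset.sdiff_disjoint
      have hTval : ∀ j ∈ (G.neighborFinset i \ Bb t) \ Fset, m0 + ε t ≤ x (k + t) j p := by
        intro j hj
        rw [Finset.mem_sdiff, Finset.mem_sdiff] at hj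
        have hjB : j ∈ (Fsetᶜ : Finset V) := Finset.mem_compl.2 hj.2
        by_contra hgt
        push_neg at hgt
        exact hj.1.2 ((hmemB t j).2 ⟨hjB, hgt⟩)
      have hup := step_sorted_down halg hB hlocal (k + t) p hp' hiF (m0 + ε t) _
        hTN hTF (hTcardB i hcard) hTval
      have hinf := Igem t
      have hnotB : i ∉ Bb (t + 1) := by
        rw [hmemB]
        push_neg
        intro _
        have hidx : k + (t + 1) = (k + t) + 1 := rfl
        rw [hidx]
        have he := hε_succ t
        linarith
      have hlt := Finset.card_lt_card
        ((Finset.ssubset_iff_of_subset (hBsub t)).2 ⟨i, hiB, hnotB⟩)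
      have hale := Finset.card_le_card (hAsub t)
      omega
  -- counting argument
  have hcard0 : (A 0).card + (Bb 0).card ≤ m := by
    have hu : (A 0 ∪ Bb 0).card = (A 0).card + (Bb 0).card :=
      Finset.card_union_of_disjoint (hdisj 0)
    have hsub : A 0 ∪ Bb 0 ⊆ (Fsetᶜ : Finset V) := by
      intro i hi
      rcases Finset.mem_union.1 hi with h | h
      · exact ((hmemA 0 i).1 h).1
      · exact ((hmemB 0 i).1 h).1
    rw [hm]
    calc (A 0).card + (Bb 0).card = (A 0 ∪ Bb 0).card := hu.symm
      _ ≤ _ := Finset.card_le_card hsub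
  have hkey : ∀ s : ℕ, s ≤ m →
      A (s * d) = ∅ ∨ Bb (s * d) = ∅ ∨ (A (s * d)).card + (Bb (s * d)).card + s ≤ m := by
    intro s
    induction s with
    | zero => intro _; right; right; simpa using hcard0
    | succ s ih =>
      intro hs
      have hs' : s ≤ m := Nat.le_of_succ_le hs
      obtain ⟨q, hq⟩ : ∃ q, s * d = q := ⟨_, rfl⟩
      have hq2 : (s + 1) * d = q + d := by rw [← hq]; ring
      have hle1 : s * d ≤ (s + 1) * d := by rw [hq, hq2]; omega
      rcases ih hs' with hA0 | hB0 | hineq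
      · left
        have := hAchain _ _ hle1
        rw [hA0] at this
        exact Finset.subset_empty.1 this
      · right; left
        have := hBchain _ _ hle1
        rw [hB0] at this
        exact Finset.subset_empty.1 this
      · by_cases hAe : A (s * d) = ∅
        · left
          have := hAchain _ _ hle1
          rw [hAe] at this
          exact Finset.subset_empty.1 this
        by_cases hBe : Bb (s * d) = ∅
        · right; left
          have := hBchain _ _ hle1
          rw [hBe] at this
          exact Finset.subset_empty.1 this
        · right; right
          have hAne := Finset.nonempty_iff_ne_empty.2 hAe
          have hBne := Finset.nonempty_iff_ne_empty.2 hBe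
          have hmod : (k + s * d) % d = k % d := Nat.add_mul_mod_self_right k s d
          have hdrop' := hdrop (s * d) hAne hBne hmod
          have hle2 : s * d + 1 ≤ (s + 1) * d := by rw [hq, hq2]; omega
          have hc1 := Finset.card_le_card (hAchain _ _ hle2)
          have hc2 := Finset.card_le_card (hBchain _ _ hle2)
          omega
  have hfin : A (m * d) = ∅ ∨ Bb (m * d) = ∅ := by
    rcases hkey m le_rfl with h | h | h
    · left; exact h
    · right; exact h
    · left
      exact Finset.card_eq_zero.1 (by omega)
  have hdm : d * m = m * d := Nat.mul_comm d m
  have hRHS : (1 - 1 / (2 * (3:ℝ) ^ (d * m))) * (M - m0) = (M - m0) - ε (d * m) := by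
    simp only [hε]
    field_simp
  rw [hRHS]
  rcases hfin with hemp | hemp
  · have hsup : (Fsetᶜ : Finset V).sup' hB (fun i => x (k + d * m) i p) ≤ M - ε (d * m) := by
      apply Finset.sup'_le
      intro i hi
      by_contra hlt
      push_neg at hlt
      have hmem : i ∈ A (d * m) := (hmemA (d * m) i).2 ⟨hi, hlt⟩
      rw [hdm, hemp] at hmem
      exact absurd hmem (Finset.notMem_empty i)
    have hinf := Igem (d * m)
    linarith
  · have hinf : m0 + ε (d * m) ≤ (Fsetᶜ : Finset V).inf' hB (fun i => x (k + d * m) i p) := by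
      apply Finset.le_inf'
      intro i hi
      by_contra hlt
      push_neg at hlt
      have hmem : i ∈ Bb (d * m) := (hmemB (d * m) i).2 ⟨hi, hlt⟩
      rw [hdm, hemp] at hmem
      exact absurd hmem (Finset.notMem_empty i)
    have hsup := SleM (d * m)
    have hε' := hε0 (d * m)
    linarith
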